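/- The abandonment probability satisfies P_A/π_s = p·(1/π^q_s − 1) + 1 = p·[ (1/π^1_s − 1) + r1·(1/π^2_{s+n1} − 1) ] + 1, where p = 1 − s·μ/λ. (Equation (6) of Proposition 2.) -/

import Mathlib

open Finset

/-- Departure rate of the two-stage reneging birth-death chain. -/
noncomputable def depRate (s n1 : ℕ) (μ θ1 θ2 : ℝ) (k : ℕ) : ℝ :=
  if k ≤ s then (k : ℝ) * μ
  else if k ≤ s + n1 then (s : ℝ) * μ + ((k : ℝ) - (s : ℝ)) * θ1
  else (s : ℝ) * μ + (n1 : ℝ) * θ1 + ((k : ℝ) - (s : ℝ) - (n1 : ℝ)) * θ2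

/-- Stationary probability of state `k` in the subchain with state set `A`. -/
noncomputable def subProb (π : ℕ → ℝ) (A : Finset ℕ) (k : ℕ) : ℝ :=
  π k / ∑ k' ∈ A, π k'

/-- Abandonment (reneging + blocking) rate at state `k`. -/
noncomputable def abandonRate (s n1 n2 : ℕ) (lam μ θ1 θ2 : ℝ) (k : ℕ) : ℝ :=
  (if s < k then depRate s n1 μ θ1 θ2 k - (s : ℝ) * μ else 0) +
  (if k = s + n1 + n2 then lam else 0)

lemma sum_split_aux (f : ℕ → ℝ) (a b c : ℕ) (hab : a ≤ b) :
    ∑ k ∈ Finset.Icc a b, f k + ∑ k ∈ Finset.Icc b (b + c), f k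
      = ∑ k ∈ Finset.Icc a (b + c), f k + f b := by
  induction c with
  | zero => simp
  | succ n ih =>
      rw [show b + (n + 1) = (b + n) + 1 by omega,
        Finset.sum_Icc_succ_top (by omega : b ≤ b + n + 1),
        Finset.sum_Icc_succ_top (by omega : a ≤ b + n + 1)]
      linarith

lemma tele_aux (lam c : ℝ) (π : ℕ → ℝ) (s m : ℕ) :
    ∑ k ∈ Finset.Icc (s + 1) (s + m), (lam * π (k - 1) - c * π k) + lam * π (s + m)
      = (lam - c) * ∑ k ∈ Finset.Icc s (s + m), π k + c * π s := by
  induction m with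
  | zero => simp; ring
  | succ n ih =>
      rw [show s + (n + 1) = (s + n) + 1 by omega,
        Finset.sum_Icc_succ_top (by omega : s + 1 ≤ s + n + 1),
        Finset.sum_Icc_succ_top (by omega : s ≤ s + n + 1)]
      have h1 : s + n + 1 - 1 = s + n := by omega
      rw [h1]
      linarith

theorem stmt_5 (lam μ θ1 θ2 : ℝ) (hlam : 0 < lam) (hμ : 0 < μ)
    (hθ1 : 0 < θ1) (hθ2 : 0 < θ2) (s n1 n2 : ℕ) (hs : 1 ≤ s) (π : ℕ → ℝ)
    (hpos : ∀ k ∈ Finset.Icc 0 (s + n1 + n2), 0 < π k)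
    (hbal : ∀ k, 1 ≤ k → k ≤ s + n1 + n2 →
      π k * depRate s n1 μ θ1 θ2 k = π (k - 1) * lam)
    (hsum : ∑ k ∈ Finset.Icc 0 (s + n1 + n2), π k = 1) :
    ((1 / lam) * ∑ k ∈ Finset.Icc 0 (s + n1 + n2), abandonRate s n1 n2 lam μ θ1 θ2 k * π k) / π s = (1 - (s : ℝ) * μ / lam) * (1 / (subProb π (Finset.Icc s (s + n1 + n2)) s) - 1) + 1 ∧
    ((1 / lam) * ∑ k ∈ Finset.Icc 0 (s + n1 + n2), abandonRate s n1 n2 lam μ θ1 θ2 k * π k) / π s = (1 - (s : ℝ) * μ / lam) * ((1 / (subProb π (Finset.Icc s (s + n1)) s) - 1) + (subProb π (Finset.Icc s (s + n1)) (s + n1) / (subProb π (Finset.Icc s (s + n1)) s)) * (1 / (subProb π (Finset.Icc (s + n1) (s + n1 + n2)) (s + n1)) - 1)) + 1 := by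
  set N := s + n1 + n2 with hN
  -- positivity facts
  have hπs : 0 < π s := hpos s (Finset.mem_Icc.mpr ⟨by omega, by omega⟩)
  have hπm : 0 < π (s + n1) := hpos (s + n1) (Finset.mem_Icc.mpr ⟨by omega, by omega⟩)
  have hSq : 0 < ∑ k ∈ Finset.Icc s N, π k :=
    Finset.sum_pos (fun k hk => hpos k (by simp only [Finset.mem_Icc] at hk ⊢; omega))
      ⟨s, Finset.mem_Icc.mpr ⟨le_rfl, by omega⟩⟩
  have hS1 : 0 < ∑ k ∈ Finset.Icc s (s + n1), π k :=
    Finset.sum_pos (fun k hk => hpos k (by simp only [Finset.mem_Icc] at hk ⊢; omega))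
      ⟨s, Finset.mem_Icc.mpr ⟨le_rfl, by omega⟩⟩
  have hS2 : 0 < ∑ k ∈ Finset.Icc (s + n1) N, π k :=
    Finset.sum_pos (fun k hk => hpos k (by simp only [Finset.mem_Icc] at hk ⊢; omega))
      ⟨s + n1, Finset.mem_Icc.mpr ⟨le_rfl, by omega⟩⟩
  -- key sum identity
  have key : ∑ k ∈ Finset.Icc 0 N, abandonRate s n1 n2 lam μ θ1 θ2 k * π k
      = (lam - (s : ℝ) * μ) * ∑ k ∈ Finset.Icc s N, π k + (s : ℝ) * μ * π s := by
    have hsplit : ∑ k ∈ Finset.Icc 0 N, abandonRate s n1 n2 lam μ θ1 θ2 k * π k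
        = ∑ k ∈ Finset.Icc 0 N,
            (if s < k then depRate s n1 μ θ1 θ2 k - (s : ℝ) * μ else 0) * π k
          + ∑ k ∈ Finset.Icc 0 N, (if k = N then lam else 0) * π k := by
      rw [← Finset.sum_add_distrib]
      refine Finset.sum_congr rfl fun k _ => ?_
      simp [abandonRate, add_mul, hN]
    have hlast : ∑ k ∈ Finset.Icc 0 N, (if k = N then lam else 0) * π k = lam * π N := by
      rw [Finset.sum_eq_single N]
      · simp
      · intro b _ hb; simp [hb]
      · intro h; exact absurd (by simp) h
    have hfirst : ∑ k ∈ Finset.Icc 0 N,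
        (if s < k then depRate s n1 μ θ1 θ2 k - (s : ℝ) * μ else 0) * π k
        = ∑ k ∈ Finset.Icc (s + 1) N, (lam * π (k - 1) - (s : ℝ) * μ * π k) := by
      have h0 : ∑ k ∈ Finset.Icc (s + 1) N,
          (if s < k then depRate s n1 μ θ1 θ2 k - (s : ℝ) * μ else 0) * π k
          = ∑ k ∈ Finset.Icc 0 N,
          (if s < k then depRate s n1 μ θ1 θ2 k - (s : ℝ) * μ else 0) * π k :=
        Finset.sum_subset
          (fun x hx => by simp only [Finset.mem_Icc] at hx ⊢; omega)
          (fun x hx hxn => by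
            simp only [Finset.mem_Icc] at hx hxn
            have : ¬ s < x := by omega
            simp [this])
      rw [← h0]
      refine Finset.sum_congr rfl fun k hk => ?_
      simp only [Finset.mem_Icc] at hk
      have hk1 : s < k := by omega
      have hb := hbal k (by omega) hk.2
      simp only [if_pos hk1]
      linear_combination hb
    rw [hsplit, hlast, hfirst]
    have hNm : N = s + (n1 + n2) := by omega
    rw [hNm]
    exact tele_aux lam ((s : ℝ) * μ) π s (n1 + n2)
  have hs12 : ∑ k ∈ Finset.Icc s (s + n1), π k + ∑ k ∈ Finset.Icc (s + n1) N, π k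
      = ∑ k ∈ Finset.Icc s N, π k + π (s + n1) := by
    have := sum_split_aux π s (s + n1) n2 (by omega)
    simpa [hN, Nat.add_assoc] using this
  constructor
  · rw [key]; simp only [subProb]
    field_simp
    ring
  · rw [key]; simp only [subProb]
    field_simp
    linear_combination ((s : ℝ) * μ - lam) * hs12
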